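/- arXiv:1210.0312 — 2 statements merged into one kernel-verified Lean document; each statement's English description precedes it below -/
import Mathlib

section
/- For κ₁, κ₂ ∈ ℂ with Re κ₁ > 0, Re κ₂ > 0, nonnegative integers i₁, i₂, and t ≥ 0, the cross-covariance integral γ^{(i₁,i₂)}(t) := σ² (-κ₁)^{i₁} (-κ̄₂)^{i₂} ∫_{-∞}^0 e^{-κ₁(t-s)} ((t-s)^{i₁}/i₁!) e^{κ̄₂ s} ((-s)^{i₂}/i₂!) ds equals (σ² (-κ₁)^{i₁} (-κ̄₂)^{i₂} e^{-κ₁ t} / i₂!) · ∑_{j=0}^{i₁} t^j (i₁+i₂-j)! / ( j! (i₁-j)! (κ₁+κ̄₂)^{i₁+i₂-j+1} ). -/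
open MeasureTheory Finset Complex Filter Set

lemma tendsto_pow_mul_exp_neg_mul (n : ℕ) {b : ℝ} (hb : 0 < b) :
    Tendsto (fun x : ℝ => x ^ n * Real.exp (-(b * x))) atTop (nhds 0) := by
  have h1 : Tendsto (fun x : ℝ => b * x) atTop atTop :=
    Filter.tendsto_id.const_mul_atTop hb
  have h2 := ((Real.tendsto_pow_mul_exp_neg_atTop_nhds_zero n).comp h1).const_mul ((b ^ n)⁻¹)
  rw [mul_zero] at h2
  refine h2.congr fun x => ?_
  simp only [Function.comp]
  rw [mul_pow]
  field_simp

lemma integrableOn_pow_mul_cexp (m : ℕ) {c : ℂ} (hc : 0 < c.re) :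
    IntegrableOn (fun x : ℝ => (x : ℂ) ^ m * Complex.exp (-c * x)) (Ioi 0) := by
  have hR : IntegrableOn (fun x : ℝ => x ^ m * Real.exp (-(c.re * x))) (Ioi 0) := by
    have := integrableOn_rpow_mul_exp_neg_mul_rpow (p := 1) (s := (m : ℝ))
      (by exact_mod_cast neg_one_lt_zero.trans_le (Nat.cast_nonneg m) : (-1 : ℝ) < (m : ℝ)) one_pos hc
    refine this.congr_fun (fun x hx => ?_) measurableSet_Ioi
    simp only [Real.rpow_one, Real.rpow_natCast, neg_mul]
  refine hR.mono' ?_ ?_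
  · exact ((Complex.continuous_ofReal.pow m).mul
      (Complex.continuous_exp.comp (by fun_prop))).aestronglyMeasurable
  · filter_upwards [self_mem_ae_restrict measurableSet_Ioi] with x hx
    rw [Set.mem_Ioi] at hx
    rw [norm_mul, norm_pow, Complex.norm_exp]
    simp only [Complex.norm_real, Real.norm_eq_abs, abs_of_pos hx, Complex.neg_re,
      Complex.mul_re, Complex.ofReal_re, Complex.ofReal_im, mul_zero, sub_zero, neg_mul]
    exact le_rfl


lemma integral_pow_mul_cexp (m : ℕ) {c : ℂ} (hc : 0 < c.re) :
    ∫ x in Ioi (0:ℝ), (x : ℂ) ^ m * Complex.exp (-c * x)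
      = (Nat.factorial m) / c ^ (m + 1) := by
  have hc0 : c ≠ 0 := fun h => by simp [h] at hc
  induction m with
  | zero =>
    have hderiv : ∀ x ∈ Ioi (0:ℝ), HasDerivAt (fun x : ℝ => -Complex.exp (-c * x) / c)
        ((x:ℂ) ^ 0 * Complex.exp (-c * x)) x := by
      intro x _
      have h : HasDerivAt (fun z : ℂ => -Complex.exp (-c * z) / c)
          ((x:ℂ) ^ 0 * Complex.exp (-c * (x:ℂ))) (x:ℂ) := by
        have h1 : HasDerivAt (fun z : ℂ => -c * z) (-c) (x:ℂ) := by
          simpa using (hasDerivAt_id (x:ℂ)).const_mul (-c)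
        have h2 := (Complex.hasDerivAt_exp (-c * (x:ℂ))).comp (x:ℂ) h1
        have h3 := (h2.neg).div_const c
        refine h3.congr_deriv ?_
        rw [pow_zero, one_mul]
        field_simp
      exact h.comp_ofReal
    have htend : Tendsto (fun x : ℝ => -Complex.exp (-c * x) / c) atTop (nhds 0) := by
      apply squeeze_zero_norm' (a := fun x : ℝ => Real.exp (-(c.re * x)) * ‖c‖⁻¹)
      · filter_upwards [eventually_gt_atTop (0:ℝ)] with x _
        rw [norm_div, norm_neg, Complex.norm_exp,
          div_eq_mul_inv]
        simp only [Complex.neg_re, Complex.mul_re, Complex.ofReal_re, Complex.ofReal_im,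
          mul_zero, sub_zero, neg_mul]
        exact le_rfl
      · simpa using (tendsto_pow_mul_exp_neg_mul 0 hc).mul_const (‖c‖⁻¹)
    have hcont : ContinuousWithinAt (fun x : ℝ => -Complex.exp (-c * x) / c) (Ici 0) 0 :=
      (((Complex.continuous_exp.comp (by fun_prop)).neg).div_const c).continuousWithinAt
    have := integral_Ioi_of_hasDerivAt_of_tendsto
      (f := fun x : ℝ => -Complex.exp (-c * x) / c)
      (f' := fun x : ℝ => (x:ℂ) ^ 0 * Complex.exp (-c * x)) (a := 0)
      hcont hderiv (integrableOn_pow_mul_cexp 0 hc) htend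
    rw [this]
    simp only [Complex.ofReal_zero, mul_zero, Complex.exp_zero, zero_sub, neg_div, neg_neg,
      pow_one, Nat.factorial_zero, Nat.cast_one, one_div]
    rw [pow_one]
  | succ m ih =>
    have hint1 := integrableOn_pow_mul_cexp (m+1) hc
    have hint2 := integrableOn_pow_mul_cexp m hc
    have hderiv : ∀ x ∈ Ioi (0:ℝ),
        HasDerivAt (fun x : ℝ => -(x:ℂ) ^ (m+1) * Complex.exp (-c * x) / c)
        ((x:ℂ) ^ (m+1) * Complex.exp (-c * x)
          - ((m:ℂ)+1)/c * ((x:ℂ) ^ m * Complex.exp (-c * x))) x := by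
      intro x _
      have h : HasDerivAt (fun z : ℂ => -z ^ (m+1) * Complex.exp (-c * z) / c)
          ((x:ℂ) ^ (m+1) * Complex.exp (-c * (x:ℂ))
            - ((m:ℂ)+1)/c * ((x:ℂ) ^ m * Complex.exp (-c * (x:ℂ)))) (x:ℂ) := by
        have h1 : HasDerivAt (fun z : ℂ => -c * z) (-c) (x:ℂ) := by
          simpa using (hasDerivAt_id (x:ℂ)).const_mul (-c)
        have h2 := (Complex.hasDerivAt_exp (-c * (x:ℂ))).comp (x:ℂ) h1
        have h3 : HasDerivAt (fun z : ℂ => -z ^ (m+1)) (-(((m:ℂ)+1) * (x:ℂ) ^ m)) (x:ℂ) := by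
          have := (hasDerivAt_pow (m+1) (x:ℂ)).neg
          refine this.congr_deriv ?_
          push_cast
          ring
        have h4 := (h3.mul h2).div_const c
        refine h4.congr_deriv ?_
        simp only [Function.comp_apply]
        field_simp
        ring
      exact h.comp_ofReal
    have htend : Tendsto (fun x : ℝ => -(x:ℂ) ^ (m+1) * Complex.exp (-c * x) / c)
        atTop (nhds 0) := by
      apply squeeze_zero_norm'
        (a := fun x : ℝ => (x ^ (m+1) * Real.exp (-(c.re * x))) * ‖c‖⁻¹)
      · filter_upwards [eventually_gt_atTop (0:ℝ)] with x hx
        rw [norm_div, norm_mul, norm_neg, norm_pow, Complex.norm_exp, div_eq_mul_inv]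
        simp only [Complex.neg_re, Complex.mul_re, Complex.ofReal_re, Complex.ofReal_im,
          mul_zero, sub_zero, neg_mul, Complex.norm_real, Real.norm_eq_abs, abs_of_pos hx]
        exact le_rfl
      · simpa using (tendsto_pow_mul_exp_neg_mul (m+1) hc).mul_const (‖c‖⁻¹)
    have hcont : ContinuousWithinAt
        (fun x : ℝ => -(x:ℂ) ^ (m+1) * Complex.exp (-c * x) / c) (Ici 0) 0 :=
      ((((Complex.continuous_ofReal.pow (m+1)).neg).mul
        (Complex.continuous_exp.comp (by fun_prop))).div_const c).continuousWithinAt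
    have hkey := integral_Ioi_of_hasDerivAt_of_tendsto
      (f := fun x : ℝ => -(x:ℂ) ^ (m+1) * Complex.exp (-c * x) / c)
      (f' := fun x : ℝ => (x:ℂ) ^ (m+1) * Complex.exp (-c * x)
          - ((m:ℂ)+1)/c * ((x:ℂ) ^ m * Complex.exp (-c * x))) (a := 0)
      hcont hderiv (hint1.sub (hint2.const_mul _)) htend
    rw [integral_sub hint1 (hint2.const_mul _), MeasureTheory.integral_const_mul, ih] at hkey
    simp only [Complex.ofReal_zero, zero_pow (Nat.succ_ne_zero m), neg_zero, zero_mul,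
      zero_div, sub_zero] at hkey
    have h5 : (∫ x in Ioi (0:ℝ), (x:ℂ) ^ (m+1) * Complex.exp (-c * x))
        = ((m:ℂ)+1)/c * ((Nat.factorial m) / c ^ (m + 1)) := by
      exact sub_eq_zero.mp hkey
    rw [h5, Nat.factorial_succ]
    have hcp : c ^ (m + 1) ≠ 0 := pow_ne_zero _ hc0
    have hcp2 : c ^ (m + 1 + 1) ≠ 0 := pow_ne_zero _ hc0
    push_cast
    field_simp
    ring

/-- Closed formula for the cross-covariance integral of Ornstein–Uhlenbeck
processes of degrees `i₁` and `i₂`. -/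
theorem ou_cross_covariance_formula (κ₁ κ₂ : ℂ) (h₁ : 0 < κ₁.re) (h₂ : 0 < κ₂.re)
    (i₁ i₂ : ℕ) (σ : ℝ) (hσ : 0 < σ) (t : ℝ) (ht : 0 ≤ t) :
    (σ : ℂ) ^ 2 * (-κ₁) ^ i₁ * (-(starRingEnd ℂ) κ₂) ^ i₂ *
      ∫ s in Set.Iic (0 : ℝ),
        Complex.exp (-κ₁ * ((t : ℂ) - s)) * (((t : ℂ) - s) ^ i₁ / (Nat.factorial i₁)) *
          Complex.exp ((starRingEnd ℂ) κ₂ * s) * ((-(s : ℂ)) ^ i₂ / (Nat.factorial i₂)) =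
    (σ : ℂ) ^ 2 * (-κ₁) ^ i₁ * (-(starRingEnd ℂ) κ₂) ^ i₂ * Complex.exp (-κ₁ * t) /
        (Nat.factorial i₂) *
      ∑ j ∈ range (i₁ + 1),
        (t : ℂ) ^ j * (Nat.factorial (i₁ + i₂ - j)) /
          ((Nat.factorial j) * (Nat.factorial (i₁ - j)) *
            (κ₁ + (starRingEnd ℂ) κ₂) ^ (i₁ + i₂ - j + 1)) := by
  set c : ℂ := κ₁ + (starRingEnd ℂ) κ₂ with hcdef
  have hc : 0 < c.re := by
    have : c.re = κ₁.re + κ₂.re := by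
      simp [hcdef, Complex.add_re, Complex.conj_re]
    rw [this]; positivity
  have hc0 : c ≠ 0 := fun h => by simp [h] at hc
  have hI : (∫ s in Set.Iic (0 : ℝ),
        Complex.exp (-κ₁ * ((t : ℂ) - s)) * (((t : ℂ) - s) ^ i₁ / (Nat.factorial i₁)) *
          Complex.exp ((starRingEnd ℂ) κ₂ * s) * ((-(s : ℂ)) ^ i₂ / (Nat.factorial i₂)))
      = Complex.exp (-κ₁ * t) / (Nat.factorial i₂) *
        ∑ j ∈ range (i₁ + 1),
          (t : ℂ) ^ j * (Nat.factorial (i₁ + i₂ - j)) /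
            ((Nat.factorial j) * (Nat.factorial (i₁ - j)) * c ^ (i₁ + i₂ - j + 1)) := by
    rw [show Set.Iic (0:ℝ) = Set.Iic (-(0:ℝ)) by norm_num, ← integral_comp_neg_Ioi]
    have hpt : ∀ x : ℝ,
        Complex.exp (-κ₁ * ((t : ℂ) - (-x : ℝ))) *
            (((t : ℂ) - (-x : ℝ)) ^ i₁ / (Nat.factorial i₁)) *
          Complex.exp ((starRingEnd ℂ) κ₂ * ((-x : ℝ) : ℂ)) *
            ((-((-x : ℝ) : ℂ)) ^ i₂ / (Nat.factorial i₂))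
        = ∑ j ∈ range (i₁ + 1),
            (Complex.exp (-κ₁ * t) * (Nat.choose i₁ j) * (t : ℂ) ^ j /
              ((Nat.factorial i₁) * (Nat.factorial i₂))) *
            ((x : ℂ) ^ (i₁ + i₂ - j) * Complex.exp (-c * x)) := by
      intro x
      have e1 : Complex.exp (-κ₁ * ((t : ℂ) + x)) =
          Complex.exp (-κ₁ * t) * Complex.exp (-κ₁ * x) := by
        rw [← Complex.exp_add]; ring_nf
      have e2 : Complex.exp (-κ₁ * x) * Complex.exp ((starRingEnd ℂ) κ₂ * (-(x:ℂ))) =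
          Complex.exp (-c * x) := by
        rw [← Complex.exp_add]; congr 1; rw [hcdef]; ring
      push_cast
      rw [sub_neg_eq_add, neg_neg, add_pow, e1]
      rw [Finset.sum_div, Finset.mul_sum, Finset.sum_mul, Finset.sum_mul]
      refine Finset.sum_congr rfl fun j hj => ?_
      have hj' : j ≤ i₁ := Finset.mem_range_succ_iff.mp hj
      rw [show i₁ + i₂ - j = (i₁ - j) + i₂ from by omega, pow_add]
      rw [mul_comm (Complex.exp (-κ₁ * t)) (Complex.exp (-κ₁ * x))]
      rw [show Complex.exp (-κ₁ * ↑x) * Complex.exp (-κ₁ * ↑t) *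
          ((t:ℂ) ^ j * (x:ℂ) ^ (i₁ - j) * (Nat.choose i₁ j) / (Nat.factorial i₁)) *
          Complex.exp ((starRingEnd ℂ) κ₂ * (-(x:ℂ))) * ((x:ℂ) ^ i₂ / (Nat.factorial i₂))
        = (Complex.exp (-κ₁ * x) * Complex.exp ((starRingEnd ℂ) κ₂ * (-(x:ℂ)))) *
          (Complex.exp (-κ₁ * ↑t) *
          ((t:ℂ) ^ j * (x:ℂ) ^ (i₁ - j) * (Nat.choose i₁ j) / (Nat.factorial i₁)) *
          ((x:ℂ) ^ i₂ / (Nat.factorial i₂))) from by ring, e2]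
      ring
    rw [MeasureTheory.setIntegral_congr_fun measurableSet_Ioi (fun x _ => hpt x)]
    rw [MeasureTheory.integral_finset_sum _ (fun j _ =>
      ((integrableOn_pow_mul_cexp (i₁ + i₂ - j) hc).const_mul _))]
    rw [Finset.mul_sum]
    refine Finset.sum_congr rfl fun j hj => ?_
    have hj' : j ≤ i₁ := Finset.mem_range_succ_iff.mp hj
    rw [MeasureTheory.integral_const_mul, integral_pow_mul_cexp _ hc]
    have hC : ((i₁.choose j : ℕ) : ℂ) ≠ 0 := by
      exact_mod_cast (Nat.choose_pos hj').ne'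
    have hfac : ((Nat.factorial i₁ : ℂ)) =
        (Nat.choose i₁ j) * (Nat.factorial j) * (Nat.factorial (i₁ - j)) := by
      exact_mod_cast congrArg (Nat.cast : ℕ → ℂ)
        (Nat.choose_mul_factorial_mul_factorial hj').symm
    have hf1 : (Nat.factorial i₁ : ℂ) ≠ 0 := by exact_mod_cast (Nat.factorial_ne_zero i₁)
    have hf2 : (Nat.factorial i₂ : ℂ) ≠ 0 := by exact_mod_cast (Nat.factorial_ne_zero i₂)
    have hf3 : (Nat.factorial j : ℂ) ≠ 0 := by exact_mod_cast (Nat.factorial_ne_zero j)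
    have hf4 : (Nat.factorial (i₁ - j) : ℂ) ≠ 0 := by
      exact_mod_cast (Nat.factorial_ne_zero (i₁ - j))
    have hcp : c ^ (i₁ + i₂ - j + 1) ≠ 0 := pow_ne_zero _ hc0
    rw [div_mul_div_comm, div_mul_div_comm,
        div_eq_div_iff (mul_ne_zero (mul_ne_zero hf1 hf2) hcp)
          (mul_ne_zero hf2 (mul_ne_zero (mul_ne_zero hf3 hf4) hcp)), hfac]
    ring
  rw [hI]
  ring
end

section
/- Let 0 < λ₁ < λ₂ and let x = OU_{λ₁} OU_{λ₂}(σw) be the OU(2) process with real distinct parameters. Then its stationary covariance function is γ(t) = σ²(λ₂ e^{-λ₂ t} - λ₁ e^{-λ₁ t}) / (2(λ₂² - λ₁²)) for t ≥ 0; in particular γ(0) = σ²/(2(λ₁+λ₂)) and the lag-h autocorrelations are ρ_h = (λ₂ e^{-λ₂ h} - λ₁ e^{-λ₁ h})/(λ₂ - λ₁). -/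
open MeasureTheory


private lemma ou2_aux (a b s e0 e1 : ℝ) (ha : a ≠ 0) (hb : b ≠ 0) (hab : a + b ≠ 0)
    (hd : b - a ≠ 0) (hd' : a - b ≠ 0) :
    (a / (a - b)) * (a / (a - b)) * (s * e0 / (a + a))
      + (a / (a - b)) * (b / (b - a)) * (s * e0 / (a + b))
      + ((b / (b - a)) * (a / (a - b)) * (s * e1 / (b + a))
      + (b / (b - a)) * (b / (b - a)) * (s * e1 / (b + b)))
      = s * (b * e1 - a * e0) / (2 * (b ^ 2 - a ^ 2)) := by
  have h2a : a + a ≠ 0 := by simpa [two_mul] using mul_ne_zero (two_ne_zero (α := ℝ)) ha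
  have h2b : b + b ≠ 0 := by simpa [two_mul] using mul_ne_zero (two_ne_zero (α := ℝ)) hb
  rw [show b + a = a + b from add_comm b a,
    show a - b = -(b - a) from by ring, show a + a = 2 * a from by ring,
    show b + b = 2 * b from by ring,
    show b ^ 2 - a ^ 2 = (b - a) * (a + b) from by ring]
  field_simp
  ring

/-- Stationary covariance of the OU(2) process `x = OU_{λ₁}OU_{λ₂}(σ w)` with
distinct real parameters `0 < λ₁ < λ₂`.  By partial fractions
`x = K₁ ξ₁ + K₂ ξ₂` with `K₁ = 1/(1-λ₂/λ₁)`, `K₂ = 1/(1-λ₁/λ₂)`, where the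
basic OU processes `ξ₁, ξ₂` (driven by the same Wiener process) have
cross-covariances `E[ξ_j(t) ξ_k(0)] = σ² e^{-λ_j t}/(λ_j+λ_k)` for `t ≥ 0`.
Then `γ(t) = σ²(λ₂ e^{-λ₂ t} - λ₁ e^{-λ₁ t})/(2(λ₂²-λ₁²))`, in particular
`γ(0) = σ²/(2(λ₁+λ₂))`, and the lag-`h` autocorrelation is
`ρ_h = (λ₂ e^{-λ₂ h} - λ₁ e^{-λ₁ h})/(λ₂-λ₁)`. -/
theorem ou2_covariance
    {Ω : Type*} [MeasurableSpace Ω] (μ : Measure Ω) [IsProbabilityMeasure μ]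
    (lam : Fin 2 → ℝ) (hlam : 0 < lam 0) (hlt : lam 0 < lam 1) (σ : ℝ) (hσ : 0 < σ)
    (ξ : Fin 2 → ℝ → Ω → ℝ)
    (hint : ∀ (j k : Fin 2) (t s : ℝ), Integrable (fun ω => ξ j t ω * ξ k s ω) μ)
    (hcov : ∀ (j k : Fin 2) (t : ℝ), 0 ≤ t →
      ∫ ω, ξ j t ω * ξ k 0 ω ∂μ = σ ^ 2 * Real.exp (-lam j * t) / (lam j + lam k))
    (x : ℝ → Ω → ℝ)
    (hx : ∀ t ω, x t ω = (1 / (1 - lam 1 / lam 0)) * ξ 0 t ω +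
      (1 / (1 - lam 0 / lam 1)) * ξ 1 t ω) :
    (∀ t : ℝ, 0 ≤ t → ∫ ω, x t ω * x 0 ω ∂μ =
      σ ^ 2 * (lam 1 * Real.exp (-lam 1 * t) - lam 0 * Real.exp (-lam 0 * t)) /
        (2 * ((lam 1) ^ 2 - (lam 0) ^ 2))) ∧
    (∫ ω, x 0 ω * x 0 ω ∂μ = σ ^ 2 / (2 * (lam 0 + lam 1))) ∧
    (∀ h : ℕ, (∫ ω, x h ω * x 0 ω ∂μ) / ∫ ω, x 0 ω * x 0 ω ∂μ =
      (lam 1 * Real.exp (-lam 1 * h) - lam 0 * Real.exp (-lam 0 * h)) /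
        (lam 1 - lam 0)) := by
  have h0 : lam 0 ≠ 0 := ne_of_gt hlam
  have h1 : lam 1 ≠ 0 := ne_of_gt (hlam.trans hlt)
  have hsum : lam 0 + lam 1 ≠ 0 := by nlinarith
  have hdiff : lam 1 - lam 0 ≠ 0 := sub_ne_zero.mpr (ne_of_gt hlt)
  have hdiff' : lam 0 - lam 1 ≠ 0 := sub_ne_zero.mpr (ne_of_lt hlt)
  have hsq : (lam 1) ^ 2 - (lam 0) ^ 2 ≠ 0 := by
    have : (lam 1) ^ 2 - (lam 0) ^ 2 = (lam 1 - lam 0) * (lam 1 + lam 0) := by ring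
    rw [this]
    exact mul_ne_zero hdiff (by nlinarith)
  set K1 := (1 : ℝ) / (1 - lam 1 / lam 0) with hK1
  set K2 := (1 : ℝ) / (1 - lam 0 / lam 1) with hK2
  have key : ∀ t : ℝ, 0 ≤ t → ∫ ω, x t ω * x 0 ω ∂μ =
      σ ^ 2 * (lam 1 * Real.exp (-lam 1 * t) - lam 0 * Real.exp (-lam 0 * t)) /
        (2 * ((lam 1) ^ 2 - (lam 0) ^ 2)) := by
    intro t ht
    have expand : (fun ω => x t ω * x 0 ω) =
        fun ω => (K1 * K1) * (ξ 0 t ω * ξ 0 0 ω) + (K1 * K2) * (ξ 0 t ω * ξ 1 0 ω)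
          + ((K2 * K1) * (ξ 1 t ω * ξ 0 0 ω) + (K2 * K2) * (ξ 1 t ω * ξ 1 0 ω)) := by
      funext ω; rw [hx, hx]; ring
    rw [expand]
    have I00 := (hint 0 0 t 0).const_mul (K1 * K1)
    have I01 := (hint 0 1 t 0).const_mul (K1 * K2)
    have I10 := (hint 1 0 t 0).const_mul (K2 * K1)
    have I11 := (hint 1 1 t 0).const_mul (K2 * K2)
    have Ileft : Integrable (fun ω => (K1 * K1) * (ξ 0 t ω * ξ 0 0 ω)
        + (K1 * K2) * (ξ 0 t ω * ξ 1 0 ω)) μ := I00.add I01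
    have Iright : Integrable (fun ω => (K2 * K1) * (ξ 1 t ω * ξ 0 0 ω)
        + (K2 * K2) * (ξ 1 t ω * ξ 1 0 ω)) μ := I10.add I11
    rw [integral_add Ileft Iright, integral_add I00 I01, integral_add I10 I11,
      integral_const_mul, integral_const_mul, integral_const_mul, integral_const_mul,
      hcov 0 0 t ht, hcov 0 1 t ht, hcov 1 0 t ht, hcov 1 1 t ht]
    have hK1' : K1 = lam 0 / (lam 0 - lam 1) := by
      rw [hK1]; field_simp
    have hK2' : K2 = lam 1 / (lam 1 - lam 0) := by
      rw [hK2]; field_simp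
    have h00 : lam 0 + lam 0 ≠ 0 := by nlinarith
    have h11 : lam 1 + lam 1 ≠ 0 := by nlinarith
    rw [hK1', hK2']
    exact ou2_aux _ _ _ _ _ h0 h1 hsum hdiff hdiff'
  have key0 : ∫ ω, x 0 ω * x 0 ω ∂μ = σ ^ 2 / (2 * (lam 0 + lam 1)) := by
    rw [key 0 le_rfl]
    simp only [mul_zero, Real.exp_zero, mul_one]
    field_simp
    ring
  refine ⟨key, key0, fun h => ?_⟩
  rw [key h (Nat.cast_nonneg h), key0]
  have e0 : Real.exp (-lam 0 * h) > 0 := Real.exp_pos _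
  field_simp
  ring
end
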